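/- Let $N\geq 1$, $1<p<\infty$, $m\in C([0,1])$ with $I^+ = \{r : m(r)>0\}$ satisfying $0 < \mathrm{meas}((0,1)\setminus I^+) < 1$. Fix $k\geq 1$ and $\gamma>0$, and let $f$ be continuous with $f(s)s>0$ for $s\neq 0$. Suppose $(\eta_n, y_n)$ is a sequence with $\eta_n \to +\infty$, where each $y_n$ is a nontrivial solution of $(r^{N-1}\varphi_p(y_n'))' + \gamma\eta_n r^{N-1}m(r)f(y_n)=0$ on $(0,1)$ with $y_n'(0)=y_n(1)=0$, and each $y_n$ has exactly $k-1$ simple zeros in $(0,1)$, with $f(s)/\varphi_p(s)$ bounded below by a positive constant. Then a contradiction arises: any closed subinterval of $I^+$ of positive length must eventually contain more than $k-1$ zeros of $y_n$, so the limit nodal intervals exhaust $(0,1)\setminus I^+$, contradicting $\mathrm{meas}((0,1)\setminus I^+) < 1$. Hence the parameter sequence $\eta_n$ along any such branch of $k-1$-nodal solutions is bounded. -/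

import Mathlib

open MeasureTheory Set Filter Topology

/-- `φ_p(s) = |s|^(p-2) s`. -/
noncomputable def phi (p s : ℝ) : ℝ := |s| ^ (p - 2) * s

/-- A solution of `(r^{N-1} φ_p(u'))' + F(r) = 0` on `[0,1]`, in integrated form. -/
def SolEq (p : ℝ) (N : ℕ) (F : ℝ → ℝ) (u u' : ℝ → ℝ) : Prop :=
  (∀ r ∈ Icc (0:ℝ) 1, HasDerivWithinAt u (u' r) (Icc (0:ℝ) 1) r) ∧
  ContinuousOn u' (Icc (0:ℝ) 1) ∧
  ∀ r ∈ Icc (0:ℝ) 1,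
    r ^ (N - 1) * phi p (u' r)
      = (0:ℝ) ^ (N - 1) * phi p (u' 0) - ∫ t in (0:ℝ)..r, F t


/-- endpoint lower bound from derivative lower bound -/
lemma myDerivLB {g g' : ℝ → ℝ} {a b cc : ℝ} (hab : a ≤ b)
    (hg : ∀ t ∈ Icc a b, HasDerivWithinAt g (g' t) (Icc a b) t)
    (hc : ∀ t ∈ Icc a b, cc ≤ g' t) :
    cc * (b - a) ≤ g b - g a := by
  have hmono : MonotoneOn (fun t => g t - cc * t) (Icc a b) := by
    apply monotoneOn_of_hasDerivWithinAt_nonneg (f' := fun t => g' t - cc) (convex_Icc a b)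
    · intro t ht
      exact ((hg t ht).sub (by simpa using ((hasDerivAt_id t).const_mul cc).hasDerivWithinAt)).continuousWithinAt
    · intro t ht
      have ht' : t ∈ Icc a b := interior_subset ht
      exact (((hg t ht').sub (by simpa using ((hasDerivAt_id t).const_mul cc).hasDerivWithinAt))).mono interior_subset
    · intro t ht
      have := hc t (interior_subset ht); linarith
  have := hmono ⟨le_refl a, hab⟩ ⟨hab, le_refl b⟩ hab
  simp only at this
  linarith

lemma phi_ne_zero {p s : ℝ} (hs : s ≠ 0) : phi p s ≠ 0 :=
  mul_ne_zero (ne_of_gt (Real.rpow_pos_of_pos (abs_pos.mpr hs) _)) hs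

lemma abs_phi (p : ℝ) (hp : 1 < p) (s : ℝ) : |phi p s| = |s| ^ (p - 1) := by
  rcases eq_or_ne s 0 with rfl | hs
  · simp [phi, Real.zero_rpow (by linarith : p - (1:ℝ) ≠ 0)]
  · rw [phi, abs_mul, abs_of_nonneg (Real.rpow_nonneg (abs_nonneg s) _),
      ← Real.rpow_add_one (abs_ne_zero.mpr hs)]
    ring_nf

lemma phi_mul_self (p : ℝ) (hp : 1 < p) (s : ℝ) : phi p s * s = |s| ^ p := by
  rcases eq_or_ne s 0 with rfl | hs
  · simp [phi, Real.zero_rpow (by linarith : p ≠ 0)]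
  · have h2 : s * s = |s| ^ (2:ℝ) := by
      have h3 : |s| ^ (2:ℝ) = |s| ^ (2:ℕ) := by
        rw [← Real.rpow_natCast |s| 2]; norm_num
      rw [h3, pow_two, abs_mul_abs_self]
    rw [phi, mul_assoc, h2, ← Real.rpow_add (abs_pos.mpr hs)]
    norm_num

lemma phi_sq (p : ℝ) (hp : 1 < p) (s : ℝ) : (phi p s) ^ 2 = |s| ^ (2*p - 2) := by
  rcases eq_or_ne s 0 with rfl | hs
  · simp [phi, Real.zero_rpow (by linarith : 2*p - (2:ℝ) ≠ 0)]
  · have : (phi p s)^2 = |phi p s|^2 := (sq_abs _).symm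
    rw [this, abs_phi p hp, ← Real.rpow_natCast (|s| ^ (p-1)) 2, ← Real.rpow_mul (abs_nonneg s)]
    norm_num; ring_nf

lemma hasDerivAt_phi {p s : ℝ} (hp : 1 < p) (hs : s ≠ 0) :
    HasDerivAt (phi p) ((p - 1) * |s| ^ (p - 2)) s := by
  rcases hs.lt_or_gt with h | h
  · -- s < 0
    have houter : HasDerivAt (fun y : ℝ => y ^ (p-1)) ((p-1) * (-s) ^ (p-1-1)) (-s) :=
      Real.hasDerivAt_rpow_const (Or.inl (by simpa using hs))
    have hneg : HasDerivAt (fun x : ℝ => -x) (-1) s := hasDerivAt_neg s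
    have hcomp : HasDerivAt (fun x : ℝ => (-x) ^ (p-1)) ((p-1) * (-s) ^ (p-1-1) * (-1)) s :=
      houter.comp s hneg
    have hfull : HasDerivAt (fun x : ℝ => -((-x) ^ (p-1))) ((p-1) * (-s) ^ (p-2)) s := by
      have := hcomp.fun_neg
      refine this.congr_deriv ?_
      ring_nf
    rw [abs_of_neg h]
    apply hfull.congr_of_eventuallyEq
    filter_upwards [Iio_mem_nhds h] with x hx
    have hx' : (x:ℝ) < 0 := hx
    rw [phi, abs_of_neg hx']
    rw [show p - 1 = (p-2) + 1 by ring, Real.rpow_add_one (by linarith : (-x) ≠ 0)]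
    ring
  · -- 0 < s
    have houter : HasDerivAt (fun y : ℝ => y ^ (p-1)) ((p-1) * s ^ (p-1-1)) s :=
      Real.hasDerivAt_rpow_const (Or.inl hs)
    have hfull : HasDerivAt (fun y : ℝ => y ^ (p-1)) ((p-1) * s ^ (p-2)) s := by
      convert houter using 2; ring
    rw [abs_of_pos h]
    apply hfull.congr_of_eventuallyEq
    filter_upwards [Ioi_mem_nhds h] with x hx
    have hx' : (0:ℝ) < x := hx
    rw [phi, abs_of_pos hx', show p - 1 = (p-2) + 1 by ring,
      Real.rpow_add_one (ne_of_gt hx')]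

lemma riccati_blowup (q B A α L : ℝ) (hq : 1 < q) (hB : 0 < B) (hL : 0 < L)
    (v g : ℝ → ℝ)
    (hv : ∀ t ∈ Icc α (α + L), HasDerivWithinAt v (g t) (Icc α (α + L)) t)
    (hg : ∀ t ∈ Icc α (α + L), A + B * |v t| ^ q ≤ g t)
    (hA0 : 0 < A)
    (hA : 8 * (B * (q - 1) * L / 4) ^ (-(1:ℝ) / (q - 1)) / L ≤ A) : False := by
  have hq1 : (0:ℝ) < q - 1 := by linarith
  set E : ℝ := B * (q - 1) * L / 4 with hE_def
  have hE : 0 < E := by positivity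
  set R : ℝ := E ^ (-(1:ℝ) / (q - 1)) with hR_def
  have hR : 0 < R := Real.rpow_pos_of_pos hE _
  have hRE : R ^ (1 - q) = E := by
    rw [hR_def, ← Real.rpow_mul hE.le]
    rw [show -(1:ℝ) / (q - 1) * (1 - q) = 1 by field_simp; ring]
    exact Real.rpow_one E
  clear_value E R
  -- derivative is at least A everywhere (used for monotonicity)
  have hgA : ∀ t ∈ Icc α (α + L), A ≤ g t := by
    intro t ht
    have h1 := hg t ht
    have h2 : 0 ≤ B * |v t| ^ q := by positivity
    linarith
  have key : ∀ x y : ℝ, α ≤ x → x ≤ y → y ≤ α + L → A * (y - x) ≤ v y - v x := by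
    intro x y hx hxy hy
    exact myDerivLB hxy
      (fun t ht => (hv t ⟨le_trans hx ht.1, le_trans ht.2 hy⟩).mono
        (Icc_subset_Icc hx hy))
      (fun t ht => hgA t ⟨le_trans hx ht.1, le_trans ht.2 hy⟩)
  set t₁ : ℝ := α + L/4 with ht₁_def
  set t₂ : ℝ := α + L/2 with ht₂_def
  set β : ℝ := α + L with hβ_def
  clear_value t₁ t₂ β
  have ht₁m : t₁ ∈ Icc α β := by constructor <;> linarith [ht₁_def, hβ_def]
  -- Step A : -R ≤ v t₁
  have stepA : -R ≤ v t₁ := by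
    by_cases hcase : 0 ≤ v t₁
    · linarith
    push_neg at hcase
    have hvneg : ∀ t ∈ Icc α t₁, v t < 0 := by
      intro t ht
      have h1 := key t t₁ ht.1 ht.2 (by linarith [ht₁_def, hβ_def])
      nlinarith [mul_nonneg hA0.le (sub_nonneg.2 ht.2)]
    have hsub : Icc α t₁ ⊆ Icc α β := Icc_subset_Icc le_rfl (by linarith [ht₁_def, hβ_def])
    set z : ℝ → ℝ := fun t => (-(v t)) ^ (1 - q) with hz_def
    have hzd : ∀ t ∈ Icc α t₁, HasDerivWithinAt z
        ((1-q) * (-(v t)) ^ ((1-q) - 1) * (-(g t))) (Icc α t₁) t := by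
      intro t ht
      exact (Real.hasDerivAt_rpow_const
        (Or.inl (by have := hvneg t ht; intro hh; rw [neg_eq_zero] at hh; exact absurd hh (by linarith)))).comp_hasDerivWithinAt t
        (((hv t (hsub ht)).mono hsub).neg)
    have hzlb : ∀ t ∈ Icc α t₁, B * (q - 1) ≤ (1-q) * (-(v t)) ^ ((1-q) - 1) * (-(g t)) := by
      intro t ht
      have hw : 0 < -(v t) := by linarith [hvneg t ht]
      have habs : |v t| = -(v t) := abs_of_neg (hvneg t ht)
      have hgt : B * (-(v t)) ^ q ≤ g t := by
        have := hg t (hsub ht); rw [habs] at this; linarith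
      have hpow : (0:ℝ) < (-(v t)) ^ ((1-q) - 1) := Real.rpow_pos_of_pos hw _
      have hmul : (-(v t)) ^ ((1-q) - 1) * (-(v t)) ^ q = 1 := by
        rw [← Real.rpow_add hw]
        rw [show (1-q) - 1 + q = 0 by ring, Real.rpow_zero]
      calc B * (q-1) = (q-1) * ((-(v t)) ^ ((1-q)-1) * (B * (-(v t)) ^ q)) := by
            rw [show (-(v t)) ^ ((1-q)-1) * (B * (-(v t)) ^ q)
                = B * ((-(v t)) ^ ((1-q)-1) * (-(v t)) ^ q) by ring, hmul]; ring
        _ ≤ (q-1) * ((-(v t)) ^ ((1-q)-1) * g t) := by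
            apply mul_le_mul_of_nonneg_left _ hq1.le
            exact mul_le_mul_of_nonneg_left hgt hpow.le
        _ = (1-q) * (-(v t)) ^ ((1-q) - 1) * (-(g t)) := by ring
    have hlb := myDerivLB (by linarith [ht₁_def]) hzd hzlb
    have hz1 : E ≤ z t₁ := by
      have hzα : 0 < z α := Real.rpow_pos_of_pos (by linarith [hvneg α ⟨le_rfl, by linarith [ht₁_def]⟩]) _
      have : t₁ - α = L / 4 := by rw [ht₁_def]; ring
      rw [this] at hlb
      have : B * (q-1) * (L/4) = E := by rw [hE_def]; ring
      linarith
    -- z t₁ = (-(v t₁)) ^ (1-q) ≥ E = R ^ (1-q)  ⇒  -(v t₁) ≤ R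
    rw [← hRE] at hz1
    have hw1 : 0 < -(v t₁) := by linarith
    have := (Real.rpow_le_rpow_iff_of_neg hR hw1 (by linarith : 1 - q < 0)).mp hz1
    linarith
  -- Step B : R ≤ v t₂
  have stepB : R ≤ v t₂ := by
    have h1 := key t₁ t₂ (by linarith [ht₁_def]) (by linarith [ht₁_def, ht₂_def])
      (by linarith [ht₂_def, hβ_def])
    have h2 : t₂ - t₁ = L / 4 := by rw [ht₁_def, ht₂_def]; ring
    rw [h2] at h1
    have h3 : 8 * R / L ≤ A := hA
    have h4 : 8 * R ≤ A * L := by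
      rw [div_le_iff₀ hL] at h3; linarith
    nlinarith
  -- Step C : contradiction on [t₂, β]
  have hvpos : ∀ t ∈ Icc t₂ β, R ≤ v t := by
    intro t ht
    have h1 := key t₂ t (by linarith [ht₂_def, hβ_def]) ht.1 ht.2
    nlinarith [mul_nonneg hA0.le (sub_nonneg.2 ht.1)]
  have hsub2 : Icc t₂ β ⊆ Icc α β := Icc_subset_Icc (by linarith [ht₂_def]) le_rfl
  set z₂ : ℝ → ℝ := fun t => -((v t) ^ (1 - q)) with hz2_def
  have hz2d : ∀ t ∈ Icc t₂ β, HasDerivWithinAt z₂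
      (-((1-q) * (v t) ^ ((1-q) - 1) * g t)) (Icc t₂ β) t := by
    intro t ht
    exact ((Real.hasDerivAt_rpow_const
      (Or.inl (by linarith [hvpos t ht] : v t ≠ 0))).comp_hasDerivWithinAt t
      ((hv t (hsub2 ht)).mono hsub2)).neg
  have hz2lb : ∀ t ∈ Icc t₂ β, B * (q - 1) ≤ -((1-q) * (v t) ^ ((1-q) - 1) * g t) := by
    intro t ht
    have hw : 0 < v t := by linarith [hvpos t ht]
    have habs : |v t| = v t := abs_of_pos hw
    have hgt : B * (v t) ^ q ≤ g t := by
      have := hg t (hsub2 ht); rw [habs] at this; linarith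
    have hpow : (0:ℝ) < (v t) ^ ((1-q) - 1) := Real.rpow_pos_of_pos hw _
    have hmul : (v t) ^ ((1-q) - 1) * (v t) ^ q = 1 := by
      rw [← Real.rpow_add hw, show (1-q) - 1 + q = 0 by ring, Real.rpow_zero]
    calc B * (q-1) = (q-1) * ((v t) ^ ((1-q)-1) * (B * (v t) ^ q)) := by
          rw [show (v t) ^ ((1-q)-1) * (B * (v t) ^ q)
              = B * ((v t) ^ ((1-q)-1) * (v t) ^ q) by ring, hmul]; ring
      _ ≤ (q-1) * ((v t) ^ ((1-q)-1) * g t) := by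
          apply mul_le_mul_of_nonneg_left _ hq1.le
          exact mul_le_mul_of_nonneg_left hgt hpow.le
      _ = -((1-q) * (v t) ^ ((1-q) - 1) * g t) := by ring
  have hlb2 := myDerivLB (by linarith [ht₂_def, hβ_def]) hz2d hz2lb
  have hβt₂ : β - t₂ = L / 2 := by rw [ht₂_def, hβ_def]; ring
  rw [hβt₂] at hlb2
  -- z₂ t₂ = -(v t₂)^(1-q) ≥ -E  since (v t₂)^(1-q) ≤ R^(1-q) = E
  have hz2t₂ : (v t₂) ^ (1 - q) ≤ E := by
    rw [← hRE]
    exact (Real.rpow_le_rpow_iff_of_neg (by linarith : 0 < v t₂) hR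
      (by linarith : 1 - q < 0)).mpr stepB
  have hz2β : 0 < (v β) ^ (1 - q) :=
    Real.rpow_pos_of_pos (by linarith [hvpos β ⟨by linarith [ht₂_def, hβ_def], le_rfl⟩]) _
  have hE2 : B * (q-1) * (L/2) = 2 * E := by rw [hE_def]; ring
  simp only [hz2_def] at hlb2
  linarith

lemma zero_in_interval
    (p : ℝ) (hp : 1 < p) (N : ℕ)
    (m : ℝ → ℝ) (hm : ContinuousOn m (Icc (0:ℝ) 1))
    (f : ℝ → ℝ) (hf : Continuous f)
    (c : ℝ) (hc : 0 < c) (hfc : ∀ s : ℝ, s ≠ 0 → c ≤ f s / phi p s)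
    (γ lam : ℝ) (hγ : 0 < γ) (hlam : 0 < lam)
    (u u' : ℝ → ℝ)
    (hsol : SolEq p N (fun t => γ * lam * t ^ (N - 1) * m t * f (u t)) u u')
    (a δ : ℝ) (ha : 0 < a) (hδ : 0 < δ)
    (α L : ℝ) (hL : 0 < L) (hα : a ≤ α) (hβ1 : α + L < 1)
    (hmδ : ∀ t ∈ Icc α (α + L), δ ≤ m t)
    (hbig : 8 * ((p-1) * (p/(p-1) - 1) * L / 4) ^ (-(1:ℝ) / (p/(p-1) - 1)) / L
        ≤ γ * lam * a ^ (N - 1) * δ * c) :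
    ∃ z ∈ Icc α (α + L), u z = 0 := by
  by_contra hno
  push_neg at hno
  have hp1 : (0:ℝ) < p - 1 := by linarith
  set q : ℝ := p / (p - 1) with hq_def
  have hq : 1 < q := (one_lt_div hp1).mpr (by linarith)
  set F : ℝ → ℝ := fun t => γ * lam * t ^ (N - 1) * m t * f (u t) with hF_def
  have hu := hsol.1
  have hid := hsol.2.2
  have hucont : ContinuousOn u (Icc (0:ℝ) 1) := fun r hr => (hu r hr).continuousWithinAt
  have hFcont : ContinuousOn F (Icc (0:ℝ) 1) := by
    apply ContinuousOn.mul
    apply ContinuousOn.mul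
    apply ContinuousOn.mul
    · exact continuousOn_const
    · exact (continuous_pow _).continuousOn
    · exact hm
    · exact hf.comp_continuousOn hucont
  -- membership facts
  have hmem : ∀ r ∈ Icc α (α + L), r ∈ Ioo (0:ℝ) 1 :=
    fun r hr => ⟨lt_of_lt_of_le (lt_of_lt_of_le ha hα) hr.1, lt_of_le_of_lt hr.2 hβ1⟩
  have hmem01 : ∀ r ∈ Icc α (α + L), r ∈ Icc (0:ℝ) 1 :=
    fun r hr => ⟨(hmem r hr).1.le, (hmem r hr).2.le⟩
  have hnhds : ∀ r ∈ Icc α (α + L), Icc (0:ℝ) 1 ∈ 𝓝 r :=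
    fun r hr => Icc_mem_nhds (hmem r hr).1 (hmem r hr).2
  -- FTC
  have hQd : ∀ r ∈ Icc α (α + L),
      HasDerivAt (fun ρ => ρ ^ (N-1) * phi p (u' ρ)) (-(F r)) r := by
    intro r hr
    have hint : IntervalIntegrable F volume 0 r := by
      apply ContinuousOn.intervalIntegrable
      apply hFcont.mono
      rw [uIcc_of_le (hmem01 r hr).1]
      exact Icc_subset_Icc le_rfl (hmem01 r hr).2
    have hsm : StronglyMeasurableAtFilter F (𝓝 r) :=
      ⟨Icc 0 1, hnhds r hr, hFcont.aestronglyMeasurable measurableSet_Icc⟩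
    have hca : ContinuousAt F r :=
      (hFcont.continuousWithinAt (hmem01 r hr)).continuousAt (hnhds r hr)
    have h1 : HasDerivAt (fun ρ => (0:ℝ) ^ (N-1) * phi p (u' 0) - ∫ t in (0:ℝ)..ρ, F t)
        (-(F r)) r := (intervalIntegral.integral_hasDerivAt_right hint hsm hca).const_sub _
    apply h1.congr_of_eventuallyEq
    filter_upwards [hnhds r hr] with x hx
    exact hid x hx
  -- derivative of u
  have hud : ∀ r ∈ Icc α (α + L), HasDerivAt u (u' r) r :=
    fun r hr => (hu r (hmem01 r hr)).hasDerivAt (hnhds r hr)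
  have hune : ∀ r ∈ Icc α (α + L), u r ≠ 0 := hno
  have hGne : ∀ r ∈ Icc α (α + L), phi p (u r) ≠ 0 :=
    fun r hr => phi_ne_zero (hune r hr)
  have hGd : ∀ r ∈ Icc α (α + L),
      HasDerivAt (fun ρ => phi p (u ρ)) ((p-1) * |u r| ^ (p-2) * (u' r)) r := by
    intro r hr
    have := (hasDerivAt_phi hp (hune r hr)).comp r (hud r hr)
    exact this
  -- Riccati function
  set v : ℝ → ℝ := fun ρ => -(ρ ^ (N-1) * phi p (u' ρ)) / phi p (u ρ) with hv_def
  set gv : ℝ → ℝ := fun ρ => (F ρ * phi p (u ρ) -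
      -(ρ ^ (N-1) * phi p (u' ρ)) * ((p-1) * |u ρ| ^ (p-2) * (u' ρ))) / (phi p (u ρ)) ^ 2
    with hgv_def
  have hvd : ∀ r ∈ Icc α (α + L), HasDerivAt v (gv r) r := by
    intro r hr
    have h1 := ((hQd r hr).neg.div (hGd r hr) (hGne r hr))
    simp only [neg_neg] at h1
    exact h1
  set A : ℝ := γ * lam * a ^ (N - 1) * δ * c with hA_def
  have hA0 : 0 < A := by positivity
  -- pointwise inequality
  have hpq : (p - 1) * q = p := by rw [hq_def]; field_simp
  have hineq : ∀ r ∈ Icc α (α + L), A + (p-1) * |v r| ^ q ≤ gv r := by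
    intro r hr
    have hr0 : (0:ℝ) < r := (hmem r hr).1
    have hr1 : r < 1 := (hmem r hr).2
    have hs : u r ≠ 0 := hune r hr
    have hS : (0:ℝ) < |u r| := abs_pos.mpr hs
    have hG : phi p (u r) ≠ 0 := hGne r hr
    have hρ0 : (0:ℝ) < r ^ (N-1) := pow_pos hr0 _
    have hρ1 : r ^ (N-1) ≤ 1 := pow_le_one₀ hr0.le hr1.le
    -- split gv
    have hsplit : gv r = F r / phi p (u r)
        + (r ^ (N-1) * phi p (u' r)) * ((p-1) * |u r| ^ (p-2) * (u' r)) / (phi p (u r)) ^ 2 := by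
      simp only [hgv_def]
      field_simp
      ring
    -- first term
    have h1 : A ≤ F r / phi p (u r) := by
      have e1 : F r / phi p (u r)
          = γ * lam * r ^ (N-1) * m r * (f (u r) / phi p (u r)) := by
        simp only [hF_def]; rw [mul_div_assoc]
      rw [e1, hA_def]
      have hb1 : a ^ (N-1) ≤ r ^ (N-1) := pow_le_pow_left₀ ha.le (le_trans hα hr.1) _
      have hb2 : δ ≤ m r := hmδ r hr
      have hb3 : c ≤ f (u r) / phi p (u r) := hfc (u r) hs
      have c1 : γ * lam * a ^ (N-1) * δ * c ≤ γ * lam * r ^ (N-1) * δ * c := by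
        have := mul_le_mul_of_nonneg_left hb1 (by positivity : (0:ℝ) ≤ γ * lam)
        have := mul_le_mul_of_nonneg_right this (by positivity : (0:ℝ) ≤ δ * c)
        calc γ * lam * a ^ (N-1) * δ * c = γ * lam * a ^ (N-1) * (δ * c) := by ring
          _ ≤ γ * lam * r ^ (N-1) * (δ * c) := by nlinarith
          _ = γ * lam * r ^ (N-1) * δ * c := by ring
      have c2 : γ * lam * r ^ (N-1) * δ * c ≤ γ * lam * r ^ (N-1) * m r * c :=
        mul_le_mul_of_nonneg_right (mul_le_mul_of_nonneg_left hb2 (by positivity)) hc.le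
      have c3 : γ * lam * r ^ (N-1) * m r * c
          ≤ γ * lam * r ^ (N-1) * m r * (f (u r) / phi p (u r)) := by
        apply mul_le_mul_of_nonneg_left hb3
        have : (0:ℝ) < δ := hδ
        nlinarith [hb2, mul_pos (mul_pos (mul_pos hγ hlam) hρ0) hδ]
      linarith
    -- second term
    have habs_v : |v r| = r ^ (N-1) * |u' r| ^ (p-1) / |u r| ^ (p-1) := by
      simp only [hv_def]
      rw [abs_div, abs_neg, abs_mul, abs_phi p hp, abs_phi p hp, abs_of_pos hρ0]
    have hvq : |v r| ^ q = (r ^ (N-1)) ^ q * (|u' r| ^ p / |u r| ^ p) := by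
      rw [habs_v, Real.div_rpow (by positivity) (by positivity),
        Real.mul_rpow (by positivity) (by positivity),
        ← Real.rpow_natCast r (N-1)]
      rw [← Real.rpow_mul (abs_nonneg (u' r)), ← Real.rpow_mul (abs_nonneg (u r)), hpq]
      rw [Real.rpow_natCast, mul_div_assoc]
    have hterm : (r ^ (N-1) * phi p (u' r)) * ((p-1) * |u r| ^ (p-2) * (u' r)) / (phi p (u r)) ^ 2
        = (p-1) * (r ^ (N-1) * (|u' r| ^ p / |u r| ^ p)) := by
      have hSS : |u r| ^ (2*p-2) = |u r| ^ (p-2) * |u r| ^ p := by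
        rw [← Real.rpow_add hS]; ring_nf
      rw [phi_sq p hp (u r),
        show (r ^ (N-1) * phi p (u' r)) * ((p-1) * |u r| ^ (p-2) * (u' r))
          = (p-1) * r ^ (N-1) * ((phi p (u' r) * u' r) * |u r| ^ (p-2)) by ring,
        phi_mul_self p hp, hSS]
      have h1 : |u r| ^ (p-2) ≠ 0 := by positivity
      have h2 : |u r| ^ p ≠ 0 := by positivity
      field_simp
    -- conclude
    have hρq : (r ^ (N-1) : ℝ) ^ q ≤ r ^ (N-1) := by
      calc (r ^ (N-1) : ℝ) ^ q ≤ (r ^ (N-1) : ℝ) ^ (1:ℝ) :=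
            Real.rpow_le_rpow_of_exponent_ge hρ0 hρ1 hq.le
        _ = r ^ (N-1) := Real.rpow_one _
    have h2 : (p-1) * |v r| ^ q
        ≤ (r ^ (N-1) * phi p (u' r)) * ((p-1) * |u r| ^ (p-2) * (u' r)) / (phi p (u r)) ^ 2 := by
      rw [hterm, hvq]
      have hWS : (0:ℝ) ≤ |u' r| ^ p / |u r| ^ p := by positivity
      exact mul_le_mul_of_nonneg_left (mul_le_mul_of_nonneg_right hρq hWS) hp1.le
    rw [hsplit]
    linarith
  exact riccati_blowup q (p-1) A α L hq hp1 hL v gv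
    (fun t ht => (hvd t ht).hasDerivWithinAt) hineq hA0 hbig

set_option maxHeartbeats 2000000 in
/-- A priori bound on the bifurcation parameter along nodal branches (Step 2 in the
proof of Theorem 4.1): there is no sequence `η_n → +∞` of parameters carrying nontrivial
solutions with exactly `k-1` simple zeros, given `0 < meas((0,1) \ I⁺) < 1`. -/
theorem parameter_bounded_along_nodal_branch
    (p : ℝ) (hp : 1 < p) (N : ℕ) (hN : 1 ≤ N)
    (m : ℝ → ℝ) (hm : ContinuousOn m (Icc (0:ℝ) 1))
    (hmeas₁ : 0 < (volume (Ioo (0:ℝ) 1 \ {r : ℝ | 0 < m r})).toReal)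
    (hmeas₂ : (volume (Ioo (0:ℝ) 1 \ {r : ℝ | 0 < m r})).toReal < 1)
    (f : ℝ → ℝ) (hf : Continuous f) (hsign : ∀ s : ℝ, s ≠ 0 → 0 < f s * s)
    (c : ℝ) (hc : 0 < c) (hfc : ∀ s : ℝ, s ≠ 0 → c ≤ f s / phi p s)
    (γ : ℝ) (hγ : 0 < γ) (k : ℕ) (hk : 1 ≤ k)
    (η : ℕ → ℝ) (hη : Tendsto η atTop atTop)
    (y y' : ℕ → ℝ → ℝ)
    (hsol : ∀ n, SolEq p N (fun t => γ * η n * t ^ (N - 1) * m t * f (y n t))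
      (y n) (y' n))
    (hbc : ∀ n, (y' n) 0 = 0 ∧ (y n) 1 = 0)
    (hnt : ∀ n, ∃ r ∈ Icc (0:ℝ) 1, y n r ≠ 0)
    (hzeros : ∀ n, {r ∈ Ioo (0:ℝ) 1 | y n r = 0}.Finite ∧
      {r ∈ Ioo (0:ℝ) 1 | y n r = 0}.ncard = k - 1 ∧
      ∀ r ∈ Ioo (0:ℝ) 1, y n r = 0 → y' n r ≠ 0) :
    False := by
  -- Step 1 : a point where m is positive
  have h1 : ∃ r0 ∈ Ioo (0:ℝ) 1, 0 < m r0 := by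
    by_contra h
    push_neg at h
    have he : Ioo (0:ℝ) 1 \ {r : ℝ | 0 < m r} = Ioo (0:ℝ) 1 := by
      ext x
      constructor
      · exact fun hx => hx.1
      · exact fun hx => ⟨hx, fun hmem => absurd hmem (not_lt.mpr (h x hx))⟩
    rw [he, Real.volume_Ioo] at hmeas₂
    norm_num at hmeas₂
  obtain ⟨r0, hr0, hm0⟩ := h1
  have hδ : 0 < m r0 / 2 := by linarith
  set δ : ℝ := m r0 / 2 with hδ_def
  clear_value δ
  -- Step 2 : interval [a,b] ⊆ (0,1) where m ≥ δ
  have hcA : ContinuousAt m r0 :=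
    (hm.continuousWithinAt ⟨hr0.1.le, hr0.2.le⟩).continuousAt (Icc_mem_nhds hr0.1 hr0.2)
  obtain ⟨ε, hε, hball⟩ := Metric.continuousAt_iff.mp hcA δ hδ
  set ε' : ℝ := min (ε/2) (min (r0/2) ((1-r0)/2)) with hε'_def
  have hε'0 : 0 < ε' := by
    apply lt_min (by linarith)
    apply lt_min (by linarith [hr0.1]) (by linarith [hr0.2])
  have hε'1 : ε' ≤ ε/2 := min_le_left _ _
  have hε'2 : ε' ≤ r0/2 := le_trans (min_le_right _ _) (min_le_left _ _)
  have hε'3 : ε' ≤ (1-r0)/2 := le_trans (min_le_right _ _) (min_le_right _ _)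
  set a : ℝ := r0 - ε' with ha_def
  set b : ℝ := r0 + ε' with hb_def
  clear_value ε' a b
  have ha : 0 < a := by rw [ha_def]; linarith [hr0.1]
  have hb1 : b < 1 := by rw [hb_def]; linarith [hr0.2]
  have hab : a < b := by rw [ha_def, hb_def]; linarith
  have hmδ : ∀ t ∈ Icc a b, δ ≤ m t := by
    intro t ht
    have hd : dist t r0 < ε := by
      rw [Real.dist_eq, abs_lt]
      constructor
      · rw [ha_def] at ht; have := ht.1; linarith [ht.1]
      · rw [hb_def] at ht; have := ht.2; linarith [ht.2]
    have h2 := hball hd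
    rw [Real.dist_eq, abs_lt] at h2
    rw [hδ_def] at *
    linarith [h2.1]
  -- Step 3 : choose n with η n large
  have hk0 : (0:ℝ) < (k:ℝ) := by exact_mod_cast hk
  set Lf : ℝ := (b - a) / k with hLf_def
  have hLf : 0 < Lf := div_pos (by linarith) hk0
  set L₀ : ℝ := Lf / 2 with hL₀_def
  have hL₀ : 0 < L₀ := by rw [hL₀_def]; linarith
  clear_value L₀
  have hkLf : (k:ℝ) * Lf = b - a := by rw [hLf_def]; field_simp
  clear_value Lf
  set C₀ : ℝ := 8 * ((p-1) * (p/(p-1) - 1) * L₀ / 4) ^ (-(1:ℝ) / (p/(p-1) - 1)) / L₀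
    with hC₀_def
  clear_value C₀
  set D : ℝ := γ * a ^ (N - 1) * δ * c with hD_def
  have hD : 0 < D := by rw [hD_def]; positivity
  clear_value D
  obtain ⟨n, hn⟩ := (hη.eventually_ge_atTop (max (C₀ / D) 1)).exists
  have hn1 : (1:ℝ) ≤ η n := le_trans (le_max_right _ _) hn
  have hbig : C₀ ≤ γ * η n * a ^ (N - 1) * δ * c := by
    have h1 : C₀ / D ≤ η n := le_trans (le_max_left _ _) hn
    rw [div_le_iff₀ hD] at h1
    calc C₀ ≤ η n * D := h1
      _ = γ * η n * a ^ (N - 1) * δ * c := by rw [hD_def]; ring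
  -- Step 4 : a zero in each of k disjoint subintervals
  have hzero : ∀ i : Fin k, ∃ z ∈ Icc (a + i * Lf) (a + i * Lf + L₀), y n z = 0 := by
    intro i
    have hik : ((i:ℕ):ℝ) + 1 ≤ (k:ℝ) := by exact_mod_cast i.isLt
    have hiL : (0:ℝ) ≤ ((i:ℕ):ℝ) := Nat.cast_nonneg _
    have hup : a + i * Lf + L₀ < b := by
      have h2 : ((i:ℕ):ℝ) * Lf ≤ ((k:ℝ) - 1) * Lf := by nlinarith
      rw [hL₀_def]
      nlinarith
    have hα' : a ≤ a + i * Lf := by nlinarith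
    have hβ' : a + i * Lf + L₀ < 1 := by linarith
    have hmδ' : ∀ t ∈ Icc (a + i * Lf) (a + i * Lf + L₀), δ ≤ m t :=
      fun t ht => hmδ t ⟨le_trans hα' ht.1, le_trans ht.2 hup.le⟩
    have hbig' : 8 * ((p-1) * (p/(p-1) - 1) * L₀ / 4) ^ (-(1:ℝ) / (p/(p-1) - 1)) / L₀
        ≤ γ * η n * a ^ (N - 1) * δ * c := by rw [hC₀_def] at hbig; exact hbig
    exact zero_in_interval p hp N m hm f hf c hc hfc γ (η n) hγ (by linarith)
      (y n) (y' n) (hsol n) a δ ha hδ (a + i * Lf) L₀ hL₀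
      hα' hβ' hmδ' hbig'
  choose z hz1 hz2 using hzero
  -- Step 5 : k distinct zeros contradict ncard = k - 1
  have hzS : ∀ i, z i ∈ {r ∈ Ioo (0:ℝ) 1 | y n r = 0} := by
    intro i
    have hiL : (0:ℝ) ≤ ((i:ℕ):ℝ) := Nat.cast_nonneg _
    have hik : ((i:ℕ):ℝ) + 1 ≤ (k:ℝ) := by exact_mod_cast i.isLt
    have hup : a + i * Lf + L₀ < b := by
      have h2 : ((i:ℕ):ℝ) * Lf ≤ ((k:ℝ) - 1) * Lf := by nlinarith
      rw [hL₀_def]; nlinarith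
    refine ⟨⟨?_, ?_⟩, hz2 i⟩
    · have := (hz1 i).1; nlinarith
    · have := (hz1 i).2; linarith
  have hinj : Function.Injective z := by
    have key : ∀ i j : Fin k, (i:ℕ) < (j:ℕ) → z i < z j := by
      intro i j hij
      have h1 : z i ≤ a + i * Lf + L₀ := (hz1 i).2
      have h2 : a + j * Lf ≤ z j := (hz1 j).1
      have h3 : ((i:ℕ):ℝ) + 1 ≤ ((j:ℕ):ℝ) := by exact_mod_cast hij
      have h4 : ((i:ℕ):ℝ) * Lf + Lf ≤ ((j:ℕ):ℝ) * Lf := by nlinarith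
      rw [hL₀_def] at h1
      linarith
    intro i j hij
    by_contra hne
    rcases lt_or_gt_of_ne hne with h | h
    · exact absurd hij (ne_of_lt (key i j h))
    · exact absurd hij.symm (ne_of_lt (key j i h))
  have hsub : Set.range z ⊆ {r ∈ Ioo (0:ℝ) 1 | y n r = 0} := range_subset_iff.mpr hzS
  have hcard := Set.ncard_le_ncard hsub (hzeros n).1
  rw [(hzeros n).2.1] at hcard
  have hrange : (Set.range z).ncard = k := by
    rw [← Set.image_univ, Set.ncard_image_of_injective _ hinj, Set.ncard_univ,
      Nat.card_eq_fintype_card, Fintype.card_fin]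
  omega
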